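/- Under the setup of the previous statement, (D A⁺ X*)(D A⁺ X*)ᵀ = (1/(nν))(D A⁺ Dᵀ − (D A⁺ Dᵀ)²), and consequently (D A⁺ X*)(D A⁺ X*)ᵀ ⪯ (Λ_X²/(n λ_D²)) I. -/

import Mathlib

open Matrix

/-- `Mplus` is the Moore–Penrose pseudoinverse of `M`. -/
def IsMoorePenrose {a b : Type*} [Fintype a] [Fintype b]
    (M : Matrix a b ℝ) (Mplus : Matrix b a ℝ) : Prop :=
  M * Mplus * M = M ∧ Mplus * M * Mplus = Mplus ∧
    (M * Mplus)ᵀ = M * Mplus ∧ (Mplus * M)ᵀ = Mplus * M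

/-- Euclidean operator norm of a real matrix. -/
noncomputable def matOpNorm {a b : Type*} [Fintype a] [Fintype b] [DecidableEq b]
    (M : Matrix a b ℝ) : ℝ :=
  ‖LinearMap.toContinuousLinearMap (Matrix.toEuclideanLin M)‖

private lemma dot_self_nonneg' {k : ℕ} (v : Fin k → ℝ) : 0 ≤ v ⬝ᵥ v :=
  Finset.sum_nonneg fun _ _ => mul_self_nonneg _

private lemma dot_mulVec_left {a b : ℕ} (W : Matrix (Fin a) (Fin b) ℝ) (v : Fin a → ℝ)
    (x : Fin b → ℝ) : v ⬝ᵥ (W *ᵥ x) = (Wᵀ *ᵥ v) ⬝ᵥ x := by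
  rw [dotProduct_mulVec, mulVec_transpose]

private lemma contract_le {a b : ℕ} (W : Matrix (Fin a) (Fin b) ℝ) (hW : Wᵀ * W = 1)
    (v : Fin a → ℝ) : (Wᵀ *ᵥ v) ⬝ᵥ (Wᵀ *ᵥ v) ≤ v ⬝ᵥ v := by
  have h1 : (W *ᵥ (Wᵀ *ᵥ v)) ⬝ᵥ (W *ᵥ (Wᵀ *ᵥ v)) = (Wᵀ *ᵥ v) ⬝ᵥ (Wᵀ *ᵥ v) := by
    rw [dot_mulVec_left, mulVec_mulVec, hW, one_mulVec]
  have h2 : v ⬝ᵥ (W *ᵥ (Wᵀ *ᵥ v)) = (Wᵀ *ᵥ v) ⬝ᵥ (Wᵀ *ᵥ v) := by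
    rw [dot_mulVec_left]
  have h3 := dot_self_nonneg' (v - W *ᵥ (Wᵀ *ᵥ v))
  rw [dotProduct_sub, sub_dotProduct, sub_dotProduct, h1,
    dotProduct_comm (W *ᵥ (Wᵀ *ᵥ v)) v, h2] at h3
  linarith

private lemma contract_eq {a b : ℕ} (W : Matrix (Fin a) (Fin b) ℝ) (hW : Wᵀ * W = 1)
    (x : Fin b → ℝ) : (W *ᵥ x) ⬝ᵥ (W *ᵥ x) = x ⬝ᵥ x := by
  rw [dot_mulVec_left, mulVec_mulVec, hW, one_mulVec]

private lemma dot_CS {k : ℕ} (y z : Fin k → ℝ) :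
    y ⬝ᵥ z ≤ Real.sqrt (y ⬝ᵥ y) * Real.sqrt (z ⬝ᵥ z) := by
  let Y : EuclideanSpace ℝ (Fin k) := (WithLp.equiv 2 (Fin k → ℝ)).symm y
  let Z : EuclideanSpace ℝ (Fin k) := (WithLp.equiv 2 (Fin k → ℝ)).symm z
  have hYZ : inner ℝ Y Z = y ⬝ᵥ z := by
    simp [Y, Z, EuclideanSpace.inner_toLp_toLp, dotProduct, mul_comm]
  have hYY : y ⬝ᵥ y = ‖Y‖ ^ 2 := by
    rw [← real_inner_self_eq_norm_sq]
    change y ⬝ᵥ y = y ⬝ᵥ star y; simp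
  have hZZ : z ⬝ᵥ z = ‖Z‖ ^ 2 := by
    rw [← real_inner_self_eq_norm_sq]
    change z ⬝ᵥ z = z ⬝ᵥ star z; simp
  calc y ⬝ᵥ z = inner ℝ Y Z := hYZ.symm
    _ ≤ ‖Y‖ * ‖Z‖ := real_inner_le_norm Y Z
    _ = Real.sqrt (y ⬝ᵥ y) * Real.sqrt (z ⬝ᵥ z) := by
        rw [hYY, hZZ, Real.sqrt_sq (norm_nonneg _), Real.sqrt_sq (norm_nonneg _)]

private lemma quad_le_opNorm {a : ℕ} (M : Matrix (Fin a) (Fin a) ℝ) (u : Fin a → ℝ) :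
    u ⬝ᵥ (M *ᵥ u) ≤ matOpNorm M * (u ⬝ᵥ u) := by
  let T := LinearMap.toContinuousLinearMap (Matrix.toEuclideanLin M)
  let Uu : EuclideanSpace ℝ (Fin a) := (WithLp.equiv 2 (Fin a → ℝ)).symm u
  have hT : T Uu = (WithLp.equiv 2 (Fin a → ℝ)).symm (M *ᵥ u) := by
    simp [T, Uu, Matrix.toEuclideanLin_apply]
  have h1 : u ⬝ᵥ (M *ᵥ u) = inner ℝ Uu (T Uu) := by
    rw [hT]; simp [Uu, EuclideanSpace.inner_toLp_toLp, dotProduct, mul_comm]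
  have hnorm : ‖Uu‖ ^ 2 = u ⬝ᵥ u := by
    rw [← real_inner_self_eq_norm_sq]
    change u ⬝ᵥ star u = u ⬝ᵥ u; simp
  calc u ⬝ᵥ (M *ᵥ u) = inner ℝ Uu (T Uu) := h1
    _ ≤ ‖Uu‖ * ‖T Uu‖ := real_inner_le_norm _ _
    _ ≤ ‖Uu‖ * (‖T‖ * ‖Uu‖) := by
        have := T.le_opNorm Uu
        nlinarith [norm_nonneg Uu]
    _ = matOpNorm M * (u ⬝ᵥ u) := by rw [← hnorm]; unfold matOpNorm; ring

private lemma psd_of_transpose_of_quad {k : ℕ} {G : Matrix (Fin k) (Fin k) ℝ}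
    (h1 : Gᵀ = G) (h2 : ∀ x : Fin k → ℝ, 0 ≤ x ⬝ᵥ (G *ᵥ x)) : G.PosSemidef := by
  refine .of_dotProduct_mulVec_nonneg ?_ ?_
  · rw [Matrix.IsHermitian, conjTranspose_eq_transpose_of_trivial, h1]
  · intro x
    simpa using h2 x

private lemma psd_smul {k : ℕ} {G : Matrix (Fin k) (Fin k) ℝ} (hG : G.PosSemidef)
    {c : ℝ} (hc : 0 ≤ c) : (c • G).PosSemidef := by
  refine psd_of_transpose_of_quad ?_ ?_
  · rw [Matrix.transpose_smul]
    have := hG.1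
    rw [Matrix.IsHermitian, conjTranspose_eq_transpose_of_trivial] at this
    rw [this]
  · intro x
    have := hG.dotProduct_mulVec_nonneg x
    simp only [star_trivial] at this
    rw [smul_mulVec, dotProduct_smul]
    exact mul_nonneg hc this

set_option maxHeartbeats 3200000

theorem DAdagXstar_product_bound {n m p r r' : ℕ}
    (X : Matrix (Fin n) (Fin p) ℝ) (D : Matrix (Fin m) (Fin p) ℝ) (ν : ℝ) (hν : 0 < ν)
    (U : Matrix (Fin m) (Fin r) ℝ) (Λ : Matrix (Fin r) (Fin r) ℝ)
    (V : Matrix (Fin p) (Fin r) ℝ) (U₁ : Matrix (Fin n) (Fin r') ℝ)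
    (hU : Uᵀ * U = 1) (hΛsym : Λᵀ = Λ) (hV : Vᵀ * V = 1) (hU₁ : U₁ᵀ * U₁ = 1)
    (Xstar : Matrix (Fin p) (Fin n) ℝ) (hXstar : Xstar = ((n : ℝ))⁻¹ • Xᵀ)
    (lamD LamX : ℝ) (hlamD : 0 < lamD)
    (hΛlow : (Λ * Λ - (lamD ^ 2) • (1 : Matrix (Fin r) (Fin r) ℝ)).PosSemidef)
    (hXX : matOpNorm (Xstar * X) ≤ LamX ^ 2)
    (A : Matrix (Fin p) (Fin p) ℝ) (hA : A = ν • (Xstar * X) + Dᵀ * D)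
    (Aplus : Matrix (Fin p) (Fin p) ℝ) (hAplus : IsMoorePenrose A Aplus)
    (hAplusSym : Aplusᵀ = Aplus)
    (B : Matrix (Fin r) (Fin r) ℝ)
    (hB : B = Λ * Λ + ν • (Vᵀ * Xstar * ((1 : Matrix (Fin n) (Fin n) ℝ) - U₁ * U₁ᵀ) * X * V))
    (hDAD : D * Aplus * Dᵀ = U * Λ * B⁻¹ * Λ * Uᵀ) :
    (D * Aplus * Xstar) * (D * Aplus * Xstar)ᵀ =
      ((n : ℝ) * ν)⁻¹ • (D * Aplus * Dᵀ - (D * Aplus * Dᵀ) * (D * Aplus * Dᵀ)) ∧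
    ((LamX ^ 2 / ((n : ℝ) * lamD ^ 2)) • (1 : Matrix (Fin m) (Fin m) ℝ) -
      (D * Aplus * Xstar) * (D * Aplus * Xstar)ᵀ).PosSemidef := by
  obtain ⟨hMP1, hMP2, hMP3, hMP4⟩ := hAplus
  -- Part 1
  have hXsX : Xstar * Xstarᵀ = (n : ℝ)⁻¹ • (Xstar * X) := by
    rw [hXstar, Matrix.transpose_smul, transpose_transpose]
    simp [Matrix.smul_mul, Matrix.mul_smul, smul_smul]
  have hXX' : Xstar * X = ν⁻¹ • (A - Dᵀ * D) := by
    rw [hA, add_sub_cancel_right, smul_smul, inv_mul_cancel₀ (ne_of_gt hν), one_smul]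
  have key : D * Aplus * (A - Dᵀ * D) * (Aplus * Dᵀ)
      = D * Aplus * Dᵀ - (D * Aplus * Dᵀ) * (D * Aplus * Dᵀ) := by
    rw [Matrix.mul_sub, Matrix.sub_mul]
    congr 1
    · calc D * Aplus * A * (Aplus * Dᵀ) = D * (Aplus * A * Aplus) * Dᵀ := by
            simp only [Matrix.mul_assoc]
        _ = D * Aplus * Dᵀ := by rw [hMP2]
    · simp only [Matrix.mul_assoc]
  have h1 : (D * Aplus * Xstar) * (D * Aplus * Xstar)ᵀ =
      ((n : ℝ) * ν)⁻¹ • (D * Aplus * Dᵀ - (D * Aplus * Dᵀ) * (D * Aplus * Dᵀ)) := by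
    have e1 : (D * Aplus * Xstar) * (D * Aplus * Xstar)ᵀ
        = D * Aplus * (Xstar * Xstarᵀ) * (Aplus * Dᵀ) := by
      rw [Matrix.transpose_mul, Matrix.transpose_mul, hAplusSym]
      simp only [Matrix.mul_assoc]
    rw [e1, hXsX, hXX', smul_smul, mul_inv]
    simp only [Matrix.mul_smul, Matrix.smul_mul, key]
  refine ⟨h1, ?_⟩
  rw [h1]
  rcases Nat.eq_zero_or_pos n with hn0 | hnpos
  · have hz : ((n : ℝ)) = 0 := by rw [hn0]; norm_num
    rw [hz]
    simp only [zero_mul, div_zero, _root_.inv_zero, zero_smul, sub_zero]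
    exact psd_of_transpose_of_quad (by simp) (by intro x; simp)
  · have hn : (0 : ℝ) < (n : ℝ) := by exact_mod_cast hnpos
    set P : Matrix (Fin n) (Fin n) ℝ := (1 : Matrix (Fin n) (Fin n) ℝ) - U₁ * U₁ᵀ with hP
    set M' : Matrix (Fin r) (Fin r) ℝ := Vᵀ * Xstar * P * X * V with hM'
    -- quadratic form of M'
    have hM'quad : ∀ x : Fin r → ℝ, x ⬝ᵥ (M' *ᵥ x) =
        ((n : ℝ))⁻¹ * ((X *ᵥ (V *ᵥ x)) ⬝ᵥ (X *ᵥ (V *ᵥ x))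
          - (U₁ᵀ *ᵥ (X *ᵥ (V *ᵥ x))) ⬝ᵥ (U₁ᵀ *ᵥ (X *ᵥ (V *ᵥ x)))) := by
      intro x
      set u := V *ᵥ x with hu
      set y := X *ᵥ u with hy
      have e : M' *ᵥ x = Vᵀ *ᵥ (Xstar *ᵥ (P *ᵥ y)) := by
        rw [hM', hy, hu]; simp only [← mulVec_mulVec]
      have eP : P *ᵥ y = y - U₁ *ᵥ (U₁ᵀ *ᵥ y) := by
        rw [hP, Matrix.sub_mulVec, Matrix.one_mulVec, ← mulVec_mulVec]
      rw [e, dot_mulVec_left, transpose_transpose, ← hu, hXstar, smul_mulVec,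
        dotProduct_smul, smul_eq_mul, dot_mulVec_left, transpose_transpose, ← hy, eP,
        dotProduct_sub, dot_mulVec_left, dot_mulVec_left U₁]
    have hM'nn : ∀ x : Fin r → ℝ, 0 ≤ x ⬝ᵥ (M' *ᵥ x) := by
      intro x
      rw [hM'quad x]
      have h1 := contract_le U₁ hU₁ (X *ᵥ (V *ᵥ x))
      have h2 : (0:ℝ) ≤ (n : ℝ)⁻¹ := by positivity
      nlinarith
    have hM'le : ∀ x : Fin r → ℝ, x ⬝ᵥ (M' *ᵥ x) ≤ LamX ^ 2 * (x ⬝ᵥ x) := by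
      intro x
      rw [hM'quad x]
      set u := V *ᵥ x with hu
      set y := X *ᵥ u with hy
      have e2 : u ⬝ᵥ ((Xstar * X) *ᵥ u) = (n : ℝ)⁻¹ * (y ⬝ᵥ y) := by
        rw [← mulVec_mulVec, hXstar, smul_mulVec, dotProduct_smul, smul_eq_mul,
          dot_mulVec_left, transpose_transpose, ← hy]
      have e3 := quad_le_opNorm (Xstar * X) u
      have e4 : u ⬝ᵥ u = x ⬝ᵥ x := contract_eq V hV x
      have e5 : (0:ℝ) ≤ (U₁ᵀ *ᵥ y) ⬝ᵥ (U₁ᵀ *ᵥ y) := dot_self_nonneg' _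
      have e6 : (0:ℝ) ≤ u ⬝ᵥ u := dot_self_nonneg' u
      have e7 : matOpNorm (Xstar * X) * (u ⬝ᵥ u) ≤ LamX ^ 2 * (u ⬝ᵥ u) :=
        mul_le_mul_of_nonneg_right hXX e6
      have hninv : (0:ℝ) ≤ (n : ℝ)⁻¹ := by positivity
      calc (n : ℝ)⁻¹ * (y ⬝ᵥ y - (U₁ᵀ *ᵥ y) ⬝ᵥ (U₁ᵀ *ᵥ y)) ≤ (n : ℝ)⁻¹ * (y ⬝ᵥ y) := by
            nlinarith
        _ = u ⬝ᵥ ((Xstar * X) *ᵥ u) := e2.symm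
        _ ≤ LamX ^ 2 * (u ⬝ᵥ u) := le_trans e3 e7
        _ = LamX ^ 2 * (x ⬝ᵥ x) := by rw [e4]
    have hM'sym : M'ᵀ = M' := by
      rw [hM', hXstar, hP]
      simp only [Matrix.transpose_mul, Matrix.transpose_smul, Matrix.transpose_sub,
        Matrix.transpose_one, Matrix.transpose_transpose, Matrix.smul_mul, Matrix.mul_smul,
        Matrix.mul_assoc]
    -- B is positive definite
    have hBsym : Bᵀ = B := by
      rw [hB]
      simp only [Matrix.transpose_add, Matrix.transpose_smul, Matrix.transpose_mul, hΛsym,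
        hM'sym]
    have hΛquad : ∀ x : Fin r → ℝ, lamD ^ 2 * (x ⬝ᵥ x) ≤ x ⬝ᵥ ((Λ * Λ) *ᵥ x) := by
      intro x
      have := hΛlow.dotProduct_mulVec_nonneg x
      simp only [star_trivial] at this
      rw [Matrix.sub_mulVec, dotProduct_sub, smul_mulVec, Matrix.one_mulVec,
        dotProduct_smul, smul_eq_mul] at this
      linarith
    have hBquad : ∀ x : Fin r → ℝ, x ⬝ᵥ (B *ᵥ x)
        = x ⬝ᵥ ((Λ * Λ) *ᵥ x) + ν * (x ⬝ᵥ (M' *ᵥ x)) := by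
      intro x
      rw [hB, Matrix.add_mulVec, dotProduct_add, smul_mulVec, dotProduct_smul,
        smul_eq_mul]
    have hBpd : B.PosDef := by
      refine .of_dotProduct_mulVec_pos ?_ ?_
      · show Bᴴ = B
        rw [conjTranspose_eq_transpose_of_trivial, hBsym]
      · intro x hx
        simp only [star_trivial]
        have h1 := hΛquad x
        have h2 := hM'nn x
        have h3 : 0 < x ⬝ᵥ x :=
          lt_of_le_of_ne (dot_self_nonneg' x) (fun h => hx (dotProduct_self_eq_zero.mp h.symm))
        have h4 := hBquad x
        nlinarith [mul_pos (pow_pos hlamD 2) h3, mul_nonneg (le_of_lt hν) h2]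
    have hBdet : IsUnit B.det := isUnit_iff_ne_zero.mpr (ne_of_gt hBpd.det_pos)
    have hBB : B * B⁻¹ = 1 := Matrix.mul_nonsing_inv B hBdet
    have hB'B : B⁻¹ * B = 1 := Matrix.nonsing_inv_mul B hBdet
    have hBisym : (B⁻¹)ᵀ = B⁻¹ := by rw [Matrix.transpose_nonsing_inv, hBsym]
    -- the key identity  S - S² = ν • T'
    set T' : Matrix (Fin m) (Fin m) ℝ := U * Λ * B⁻¹ * M' * (B⁻¹ * (Λ * Uᵀ)) with hT'
    have hid : U * Λ * B⁻¹ * Λ * Uᵀ - (U * Λ * B⁻¹ * Λ * Uᵀ) * (U * Λ * B⁻¹ * Λ * Uᵀ)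
        = ν • T' := by
      have hsq : (U * Λ * B⁻¹ * Λ * Uᵀ) * (U * Λ * B⁻¹ * Λ * Uᵀ)
          = U * Λ * B⁻¹ * (Λ * Λ) * (B⁻¹ * (Λ * Uᵀ)) := by
        simp only [Matrix.mul_assoc]
        rw [← Matrix.mul_assoc Uᵀ U, hU, Matrix.one_mul]
      have hνM' : ν • M' = B - Λ * Λ := by
        rw [hB]; abel
      rw [hsq, hT']
      have e0 : ν • (U * Λ * B⁻¹ * M' * (B⁻¹ * (Λ * Uᵀ)))
          = U * Λ * B⁻¹ * (ν • M') * (B⁻¹ * (Λ * Uᵀ)) := by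
        simp only [Matrix.mul_smul, Matrix.smul_mul]
      rw [e0, hνM', Matrix.mul_sub, Matrix.sub_mul]
      congr 1
      simp only [Matrix.mul_assoc]
      rw [← Matrix.mul_assoc B B⁻¹, hBB, Matrix.one_mul]
    rw [hDAD, hid]
    -- reduce to the core PSD statement
    have hsc1 : ((n : ℝ) * ν)⁻¹ • (ν • T') = (n : ℝ)⁻¹ • T' := by
      rw [smul_smul, mul_inv, mul_assoc, inv_mul_cancel₀ (ne_of_gt hν), mul_one]
    have hsc2 : LamX ^ 2 / ((n : ℝ) * lamD ^ 2) = (n : ℝ)⁻¹ * (LamX ^ 2 / lamD ^ 2) := by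
      rw [div_eq_mul_inv, div_eq_mul_inv, mul_inv]
      ring
    rw [hsc1, hsc2]
    have hrw : ((n : ℝ)⁻¹ * (LamX ^ 2 / lamD ^ 2)) • (1 : Matrix (Fin m) (Fin m) ℝ)
        - (n : ℝ)⁻¹ • T'
        = (n : ℝ)⁻¹ • ((LamX ^ 2 / lamD ^ 2) • (1 : Matrix (Fin m) (Fin m) ℝ) - T') := by
      rw [smul_sub, smul_smul]
    rw [hrw]
    have hT'sym : T'ᵀ = T' := by
      rw [hT']
      simp only [Matrix.transpose_mul, Matrix.transpose_transpose, hΛsym, hBisym, hM'sym,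
        Matrix.mul_assoc]
    refine psd_smul (psd_of_transpose_of_quad ?_ ?_) (by positivity)
    · rw [Matrix.transpose_sub, Matrix.transpose_smul, Matrix.transpose_one, hT'sym]
    · intro x
      obtain ⟨z, hz⟩ : ∃ z, z = Uᵀ *ᵥ x := ⟨_, rfl⟩
      obtain ⟨w, hw⟩ : ∃ w, w = B⁻¹ *ᵥ (Λ *ᵥ z) := ⟨_, rfl⟩
      obtain ⟨y, hy⟩ : ∃ y, y = Λ *ᵥ w := ⟨_, rfl⟩
      have equad : x ⬝ᵥ (T' *ᵥ x) = w ⬝ᵥ (M' *ᵥ w) := by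
        rw [hT']
        simp only [← mulVec_mulVec]
        rw [dot_mulVec_left U, ← hz, dot_mulVec_left Λ, hΛsym, dot_mulVec_left B⁻¹, hBisym,
          ← hw]
      have hBw : B *ᵥ w = Λ *ᵥ z := by
        rw [hw, mulVec_mulVec, hBB, Matrix.one_mulVec]
      have eΛΛ : w ⬝ᵥ ((Λ * Λ) *ᵥ w) = y ⬝ᵥ y := by
        rw [← mulVec_mulVec, dot_mulVec_left Λ, hΛsym, ← hy]
      have hq1 : w ⬝ᵥ (M' *ᵥ w) ≤ LamX ^ 2 * (w ⬝ᵥ w) := hM'le w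
      have hq2 : lamD ^ 2 * (w ⬝ᵥ w) ≤ y ⬝ᵥ y := by
        have := hΛquad w
        rw [eΛΛ] at this
        exact this
      have hq3 : y ⬝ᵥ y ≤ w ⬝ᵥ (B *ᵥ w) := by
        have h := hBquad w
        rw [eΛΛ] at h
        have := hM'nn w
        nlinarith
      have hq4 : w ⬝ᵥ (B *ᵥ w) = y ⬝ᵥ z := by
        rw [hBw, dot_mulVec_left Λ, hΛsym, ← hy]
      have hzz : z ⬝ᵥ z ≤ x ⬝ᵥ x := by
        rw [hz]; exact contract_le U hU x
      have hCS := dot_CS y z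
      have ha := dot_self_nonneg' y
      have hb := dot_self_nonneg' z
      have hsa : Real.sqrt (y ⬝ᵥ y) ^ 2 = y ⬝ᵥ y := Real.sq_sqrt ha
      have hsb : Real.sqrt (z ⬝ᵥ z) ^ 2 = z ⬝ᵥ z := Real.sq_sqrt hb
      have h5 : y ⬝ᵥ y ≤ z ⬝ᵥ z := by
        nlinarith [Real.sqrt_nonneg (y ⬝ᵥ y), Real.sqrt_nonneg (z ⬝ᵥ z),
          mul_self_nonneg (Real.sqrt (y ⬝ᵥ y) - Real.sqrt (z ⬝ᵥ z))]
      have hchain : lamD ^ 2 * (w ⬝ᵥ w) ≤ x ⬝ᵥ x := le_trans hq2 (le_trans h5 hzz)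
      have h6 : LamX ^ 2 * (w ⬝ᵥ w) ≤ LamX ^ 2 / lamD ^ 2 * (x ⬝ᵥ x) := by
        rw [div_mul_eq_mul_div, le_div_iff₀ (pow_pos hlamD 2)]
        nlinarith [sq_nonneg LamX]
      rw [Matrix.sub_mulVec, dotProduct_sub, smul_mulVec, Matrix.one_mulVec,
        dotProduct_smul, smul_eq_mul, equad]
      linarith
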